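/- Let V be a finite-dimensional real inner product space and let B : V → V → ℝ be a symmetric bilinear form that is positive semidefinite (B(v, v) ≥ 0 for all v ∈ V). Suppose u : ℝ → V is twice differentiable and satisfies ⟨u''(t), v⟩ + B(u(t), v) = 0 for every t ∈ ℝ and every v ∈ V. Then for every t ∈ ℝ, ‖u'(t)‖² ≤ ‖u'(0)‖² + B(u(0), u(0)) and B(u(t), u(t)) ≤ ‖u'(0)‖² + B(u(0), u(0)). -/

import Mathlib

open InnerProductSpace

/-- Stability consequence of energy conservation: for a symmetric positive
semidefinite bilinear form `B`, both the kinetic part `‖u'(t)‖²` and the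
elastic part `B(u(t),u(t))` are bounded by twice the initial energy. -/
theorem energy_stability_bounds
    {V : Type*} [NormedAddCommGroup V] [InnerProductSpace ℝ V] [FiniteDimensional ℝ V]
    (B : V →ₗ[ℝ] V →ₗ[ℝ] ℝ) (hB : ∀ x y : V, B x y = B y x)
    (hpos : ∀ v : V, 0 ≤ B v v)
    (u u' u'' : ℝ → V)
    (hu : ∀ t : ℝ, HasDerivAt u (u' t) t)
    (hu' : ∀ t : ℝ, HasDerivAt u' (u'' t) t)
    (heq : ∀ t : ℝ, ∀ v : V, ⟪u'' t, v⟫_ℝ + B (u t) v = 0) :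
    ∀ t : ℝ,
      ‖u' t‖^2 ≤ ‖u' 0‖^2 + B (u 0) (u 0) ∧
      B (u t) (u t) ≤ ‖u' 0‖^2 + B (u 0) (u 0) := by
  -- continuous version of B
  let Bc : V →L[ℝ] V →L[ℝ] ℝ :=
    LinearMap.toContinuousLinearMap
      { toFun := fun x => LinearMap.toContinuousLinearMap (B x)
        map_add' := by intro x y; ext v; simp
        map_smul' := by intro c x; ext v; simp }
  have hBc : ∀ x y : V, Bc x y = B x y := fun x y => rfl
  -- the energy function
  set E : ℝ → ℝ := fun t => ⟪u' t, u' t⟫_ℝ + Bc (u t) (u t) with hE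
  have hEderiv : ∀ t : ℝ, HasDerivAt E 0 t := by
    intro t
    have h1 : HasDerivAt (fun s => ⟪u' s, u' s⟫_ℝ)
        (⟪u' t, u'' t⟫_ℝ + ⟪u'' t, u' t⟫_ℝ) t :=
      (hu' t).inner ℝ (hu' t)
    have hc : HasDerivAt (fun s => Bc (u s)) (Bc (u' t)) t := by
      exact Bc.hasFDerivAt.comp_hasDerivAt t (hu t)
    have h2 : HasDerivAt (fun s => Bc (u s) (u s))
        (Bc (u' t) (u t) + Bc (u t) (u' t)) t := by
      have := hc.clm_apply (hu t)
      simpa using this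
    have h3 := h1.add h2
    have key : ⟪u' t, u'' t⟫_ℝ + ⟪u'' t, u' t⟫_ℝ + (Bc (u' t) (u t) + Bc (u t) (u' t)) = 0 := by
      have e1 := heq t (u' t)
      have e2 : ⟪u' t, u'' t⟫_ℝ = ⟪u'' t, u' t⟫_ℝ := real_inner_comm _ _
      have e3 : (B (u' t)) (u t) = (B (u t)) (u' t) := hB _ _
      simp only [hBc]
      linarith
    rw [key] at h3
    exact h3
  have hEconst : ∀ t : ℝ, E t = E 0 := by
    intro t
    have : ∀ s : ℝ, deriv E s = 0 := fun s => (hEderiv s).deriv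
    exact is_const_of_deriv_eq_zero (fun s => (hEderiv s).differentiableAt) this t 0
  intro t
  have hEt := hEconst t
  have hn : ∀ s : ℝ, ‖u' s‖^2 = ⟪u' s, u' s⟫_ℝ := fun s =>
    (real_inner_self_eq_norm_sq (u' s)).symm
  have hE0 : E 0 = ‖u' 0‖^2 + B (u 0) (u 0) := by
    simp only [hE, hBc, hn 0]
  have hEt' : ⟪u' t, u' t⟫_ℝ + B (u t) (u t) = ‖u' 0‖^2 + B (u 0) (u 0) := by
    rw [← hE0, ← hEt]; simp only [hE, hBc]
  constructor
  · have := hpos (u t)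
    rw [hn t]; linarith
  · have : (0:ℝ) ≤ ⟪u' t, u' t⟫_ℝ := real_inner_self_nonneg
    linarith
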